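/- arXiv:1408.0938 — 3 statements merged into one kernel-verified Lean document; each statement's English description precedes it below -/
import Mathlib

section
/- Let (𝒢_t)_{t∈[0,∞)} be a filtration on a measurable space Ω, let S : Ω → [0,∞) be 𝒢_0-measurable, let G : [0,∞) × Ω → [0,∞) be a (𝒢_t)-progressively measurable process, and let a, b ∈ [0,∞) be constants. Define S̲(ω) = max(S(ω) − a·b, 0) and S†(ω) = max(S(ω) − a·min(G_{S̲(ω)}(ω), b), 0). Then S† is a (𝒢_t)-stopping time. -/
open MeasureTheory Filter
open scoped NNReal

/-- Lemma 6.4 of the paper. Let `(𝒢 t)` be a filtration, `S` a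
`𝒢 0`-measurable nonnegative random time, `G` a `(𝒢 t)`-progressively measurable
nonnegative process and `a b ≥ 0` constants. With `S̲ ω = max (S ω - a * b) 0` and
`S† ω = max (S ω - a * min (G (S̲ ω) ω) b) 0` (truncated subtraction in `ℝ≥0`),
the random time `S†` is a `(𝒢 t)`-stopping time. -/
theorem stmt2 {Ω : Type*} {m : MeasurableSpace Ω}
    (𝒢 : Filtration ℝ≥0 m)
    (S : Ω → ℝ≥0) (hS : Measurable[𝒢 0] S)
    (G : ℝ≥0 → Ω → ℝ≥0) (hG : ProgMeasurable 𝒢 G)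
    (a b : ℝ≥0) :
    IsStoppingTime 𝒢 fun ω => S ω - a * min (G (S ω - a * b) ω) b := by
  intro t
  -- S̲ is 𝒢 0-measurable
  have hS' : Measurable[𝒢 0] (fun ω => S ω - a * b) := hS.sub measurable_const
  -- S̲ is a stopping time
  have hτ0 : IsStoppingTime 𝒢 (fun ω => ((S ω - a * b : ℝ≥0) : WithTop ℝ≥0)) := fun s =>
    𝒢.mono zero_le _ (by simp only [WithTop.coe_le_coe]; exact hS' measurableSet_Iic)
  -- truncated stopping time τ = min S̲ t
  have hτ : IsStoppingTime 𝒢 (fun ω => ((min (S ω - a * b) t : ℝ≥0) : WithTop ℝ≥0)) := fun s =>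
    𝒢.mono zero_le _ (by
      simp only [WithTop.coe_le_coe]; exact (hS'.min measurable_const) measurableSet_Iic)
  -- the stopped value is 𝒢 t-measurable
  have hsv : StronglyMeasurable[𝒢 t]
      (MeasureTheory.stoppedValue G (fun ω => ((min (S ω - a * b) t : ℝ≥0) : WithTop ℝ≥0))) :=
    stronglyMeasurable_stoppedValue_of_le hG hτ fun _ => WithTop.coe_le_coe.mpr (min_le_right _ _)
  have hmG : Measurable[𝒢 t] (fun ω => G (min (S ω - a * b) t) ω) := hsv.measurable
  -- rewrite the event
  have hset : {ω | S ω - a * min (G (S ω - a * b) ω) b ≤ t} =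
      {ω | S ω - a * b ≤ t} ∩ {ω | S ω ≤ t + a * min (G (min (S ω - a * b) t) ω) b} := by
    ext ω
    simp only [Set.mem_setOf_eq, Set.mem_inter_iff]
    constructor
    · intro h
      have h1 : S ω - a * b ≤ t := by
        refine le_trans ?_ h
        exact tsub_le_tsub_left (mul_le_mul_right (min_le_right _ _) a) (S ω)
      have h2 : min (S ω - a * b) t = S ω - a * b := min_eq_left h1
      rw [h2]
      exact ⟨h1, tsub_le_iff_right.mp h⟩
    · rintro ⟨h1, h2⟩
      rw [min_eq_left h1] at h2
      exact tsub_le_iff_right.mpr h2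
  rw [show {ω | ((S ω : WithTop ℝ≥0) - a * ((min (G (S ω - a * b) ω) b : ℝ≥0) : WithTop ℝ≥0))
      ≤ (t : WithTop ℝ≥0)} = {ω | (fun ω => S ω - a * min (G (S ω - a * b) ω) b) ω ≤ t} from
    Set.ext fun ω => by
      simp only [Set.mem_setOf_eq]; rw [← WithTop.coe_mul, ← WithTop.coe_sub, WithTop.coe_le_coe]]
  show MeasurableSet[𝒢 t] _
  rw [show {ω | (fun ω => S ω - a * min (G (S ω - a * b) ω) b) ω ≤ t} =
      {ω | S ω - a * min (G (S ω - a * b) ω) b ≤ t} from rfl, hset]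
  refine MeasurableSet.inter (𝒢.mono zero_le _ (hS' measurableSet_Iic)) ?_
  exact measurableSet_le (hS.mono (𝒢.mono zero_le) le_rfl)
    (measurable_const.add ((hmG.min measurable_const).const_mul a))
end

section
/- Let g : ℝ → ℝ be continuously differentiable with g(0) = g(1) = 0. Then y ↦ φ_{g,g}(y) = ∫_y^1 g(x−y) g(x) dx is twice differentiable on [0,1] (one-sidedly at the endpoints), with second derivative φ_{g,g}″(y) = −∫_y^1 g′(x−y) g′(x) dx = −φ_{g′,g′}(y) for every y ∈ [0,1]. -/
open MeasureTheory Set Metric intervalIntegral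
open scoped NNReal Topology

/-- The set-integral (fixed-domain) form equals the interval integral form, using `g 0 = 0`. -/
lemma eq_on_form (g h : ℝ → ℝ) (hg : Continuous g) (h0 : g 0 = 0) (hh : Continuous h)
    {z : ℝ} (hz : z ∈ Set.Icc (0 : ℝ) 1) :
    (∫ x in (0:ℝ)..1, g (max (x - z) 0) * h x) = ∫ x in z..1, g (x - z) * h x := by
  rw [intervalIntegral.integral_of_le (by norm_num : (0:ℝ) ≤ 1)]
  have hcont : Continuous fun x : ℝ => g (max (x - z) 0) * h x := by
    exact (hg.comp ((continuous_id.sub continuous_const).max continuous_const)).mul hh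
  have hsplit : Set.Ioc (0:ℝ) 1 = Set.Ioc 0 z ∪ Set.Ioc z 1 :=
    (Set.Ioc_union_Ioc_eq_Ioc hz.1 hz.2).symm
  rw [hsplit, setIntegral_union (Set.Ioc_disjoint_Ioc_of_le le_rfl) measurableSet_Ioc
      (hcont.integrableOn_Ioc) (hcont.integrableOn_Ioc)]
  have e1 : (∫ x in Set.Ioc (0:ℝ) z, g (max (x - z) 0) * h x) = 0 := by
    rw [setIntegral_congr_fun measurableSet_Ioc
      (fun x hx => by
        have : max (x - z) 0 = 0 := max_eq_right (by linarith [hx.2])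
        rw [this, h0, zero_mul])]
    exact MeasureTheory.integral_zero _ _
  have e2 : (∫ x in Set.Ioc z 1, g (max (x - z) 0) * h x)
      = ∫ x in Set.Ioc z 1, g (x - z) * h x := by
    refine setIntegral_congr_fun measurableSet_Ioc (fun x hx => ?_)
    rw [max_eq_left (by linarith [hx.1])]
  rw [e1, e2, zero_add, intervalIntegral.integral_of_le hz.2]

/-- Integration by parts using `g 0 = g 1 = 0`. -/
lemma ibp_form (g : ℝ → ℝ) (hg : ContDiff ℝ 1 g) (h0 : g 0 = 0) (h1 : g 1 = 0)
    {y : ℝ} (hy : y ∈ Set.Icc (0 : ℝ) 1) :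
    (-∫ x in y..1, deriv g (x - y) * g x) = ∫ x in y..1, g (x - y) * deriv g x := by
  have hgd : Differentiable ℝ g := hg.differentiable one_ne_zero
  have hg' : Continuous (deriv g) := hg.continuous_deriv le_rfl
  have hderiv : ∀ x : ℝ, HasDerivAt (fun x => g (x - y) * g x)
      (deriv g (x - y) * g x + g (x - y) * deriv g x) x := by
    intro x
    have h1x : HasDerivAt (fun x => g (x - y)) (deriv g (x - y)) x := by
      have := (hgd (x - y)).hasDerivAt.comp x ((hasDerivAt_id x).sub_const y)
      simpa [Function.comp_def] using this
    exact h1x.mul (hgd x).hasDerivAt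
  have hint1 : IntervalIntegrable (fun x => deriv g (x - y) * g x) volume y 1 :=
    ((hg'.comp (continuous_id.sub continuous_const)).mul hg.continuous).intervalIntegrable _ _
  have hint2 : IntervalIntegrable (fun x => g (x - y) * deriv g x) volume y 1 :=
    ((hg.continuous.comp (continuous_id.sub continuous_const)).mul hg').intervalIntegrable _ _
  have hsum : (∫ x in y..1, (deriv g (x - y) * g x + g (x - y) * deriv g x))
      = g (1 - y) * g 1 - g (y - y) * g y :=
    intervalIntegral.integral_eq_sub_of_hasDerivAt (fun x _ => hderiv x)
      (hint1.add hint2)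
  rw [intervalIntegral.integral_add hint1 hint2] at hsum
  have : g (1 - y) * g 1 - g (y - y) * g y = 0 := by
    rw [h1, sub_self, h0]; ring
  rw [this] at hsum
  linarith

open MeasureTheory Set Metric intervalIntegral
open scoped NNReal Topology

lemma core (g h : ℝ → ℝ) (hg : ContDiff ℝ 1 g) (hh : Continuous h)
    {y : ℝ} (hy : y ∈ Set.Icc (0 : ℝ) 1) :
    HasDerivAt (fun z => ∫ x in (0:ℝ)..1, g (max (x - z) 0) * h x)
      (-∫ x in y..1, deriv g (x - y) * h x) y := by
  have hgc : Continuous g := hg.continuous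
  have hg' : Continuous (deriv g) := hg.continuous_deriv le_rfl
  have hgd : Differentiable ℝ g := hg.differentiable one_ne_zero
  obtain ⟨C, hC⟩ : ∃ C : ℝ, ∀ t ∈ Set.Icc (-2:ℝ) 2, ‖deriv g t‖ ≤ C :=
    (isCompact_Icc).exists_bound_of_continuousOn hg'.continuousOn
  have hC0 : 0 ≤ C := le_trans (norm_nonneg _) (hC 0 (by norm_num))
  have hglip : LipschitzOnWith C.toNNReal g (Set.Icc (-2:ℝ) 2) := by
    refine Convex.lipschitzOnWith_of_nnnorm_deriv_le (fun x _ => hgd x) (fun x hx => ?_)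
      (convex_Icc _ _)
    have := hC x hx
    simpa [← NNReal.coe_le_coe, Real.toNNReal_of_nonneg hC0, coe_nnnorm] using this
  set F : ℝ → ℝ → ℝ := fun z x => g (max (x - z) 0) * h x with hF
  set F' : ℝ → ℝ := fun x => if y < x then -(deriv g (x - y) * h x) else 0 with hF'
  have hFcont : ∀ z : ℝ, Continuous (F z) := fun z =>
    (hgc.comp ((continuous_id.sub continuous_const).max continuous_const)).mul hh
  have key : IntervalIntegrable F' volume 0 1 ∧
      HasDerivAt (fun z => ∫ x in (0:ℝ)..1, F z x) (∫ x in (0:ℝ)..1, F' x) y := by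
    apply intervalIntegral.hasDerivAt_integral_of_dominated_loc_of_lip (s := ball y 1)
      (bound := fun x => C * |h x|) (ball_mem_nhds y one_pos)
    · exact Filter.Eventually.of_forall fun z => (hFcont z).aestronglyMeasurable
    · exact (hFcont y).intervalIntegrable _ _
    · have heq : F' = Set.indicator (Set.Ioi y) (fun x => -(deriv g (x - y) * h x)) := by
        funext x
        simp [hF', Set.indicator_apply, Set.mem_Ioi]
      rw [heq]
      exact (((hg'.comp (continuous_id.sub continuous_const)).mul hh).neg.stronglyMeasurable.indicator
        measurableSet_Ioi).aestronglyMeasurable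
    · -- Lipschitz
      refine Filter.Eventually.of_forall fun x hx => ?_
      rw [Set.uIoc_of_le (by norm_num : (0:ℝ) ≤ 1)] at hx
      rw [lipschitzOnWith_iff_dist_le_mul]
      intro z1 hz1 z2 hz2
      have hmem : ∀ z ∈ ball y 1, max (x - z) 0 ∈ Set.Icc (-2:ℝ) 2 := by
        intro z hz
        rw [mem_ball, Real.dist_eq] at hz
        constructor
        · have := le_max_right (x - z) 0; linarith
        · have h2 := abs_lt.1 hz
          have h1 : x - z ≤ 2 := by linarith [hx.2, hy.1, h2.1, h2.2]
          exact max_le h1 (by norm_num)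
      have hgb := hglip.dist_le_mul _ (hmem z1 hz1) _ (hmem z2 hz2)
      have hmaxlip : dist (max (x - z1) 0) (max (x - z2) 0) ≤ dist z1 z2 := by
        rw [Real.dist_eq, Real.dist_eq]
        have h3 := abs_max_sub_max_le_abs (x - z1) (x - z2) 0
        have e : x - z1 - (x - z2) = -(z1 - z2) := by ring
        rw [e, abs_neg] at h3
        exact h3
      have hcoe : ((Real.nnabs (C * |h x|) : ℝ≥0) : ℝ) = C * |h x| := by
        rw [Real.coe_nnabs, abs_of_nonneg (by positivity)]
      rw [hcoe]
      calc dist (F z1 x) (F z2 x)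
          = dist (g (max (x - z1) 0)) (g (max (x - z2) 0)) * |h x| := by
            simp only [hF, Real.dist_eq]
            rw [← sub_mul, abs_mul]
        _ ≤ (C * dist (max (x - z1) 0) (max (x - z2) 0)) * |h x| := by
            apply mul_le_mul_of_nonneg_right _ (abs_nonneg _)
            calc dist (g (max (x - z1) 0)) (g (max (x - z2) 0))
                ≤ C.toNNReal * dist (max (x - z1) 0) (max (x - z2) 0) := hgb
              _ = C * dist (max (x - z1) 0) (max (x - z2) 0) := by
                  rw [Real.coe_toNNReal _ hC0]
        _ ≤ (C * dist z1 z2) * |h x| := by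
            apply mul_le_mul_of_nonneg_right _ (abs_nonneg _)
            exact mul_le_mul_of_nonneg_left hmaxlip hC0
        _ = C * |h x| * dist z1 z2 := by ring
    · exact (Continuous.mul continuous_const hh.abs).intervalIntegrable _ _
    · -- a.e. differentiability at y
      have hae : ∀ᵐ x : ℝ ∂volume, x ≠ y := by
        have : (volume : Measure ℝ) {y} = 0 := Real.volume_singleton
        rw [Filter.eventually_iff, mem_ae_iff]
        convert this using 2
        ext x
        simp [Set.mem_singleton_iff, not_not]
      refine hae.mono fun x hxy _ => ?_
      rcases lt_or_gt_of_ne hxy with hlt | hgt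
      · -- x < y : F z x = g 0 * h x near y, constant
        have hconst : F y x = g 0 * h x := by
          simp only [hF]
          rw [max_eq_right (by linarith)]
        have : HasDerivAt (fun z => F z x) 0 y := by
          apply HasDerivAt.congr_of_eventuallyEq (hasDerivAt_const y (g 0 * h x))
          have hnb : Set.Ioi x ∈ 𝓝 y := Ioi_mem_nhds hlt
          filter_upwards [hnb] with z hz
          simp only [hF]
          rw [max_eq_right (by simp at hz; linarith)]
        rw [show F' x = 0 by simp [hF', not_lt.2 hlt.le]]
        exact this
      · -- x > y
        have : HasDerivAt (fun z => F z x) (-(deriv g (x - y) * h x)) y := by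
          have hd : HasDerivAt (fun z => g (x - z) * h x) (deriv g (x - y) * (-1) * h x) y := by
            have h1 : HasDerivAt (fun z : ℝ => x - z) (-1) y := by
              simpa [Pi.sub_def] using (hasDerivAt_const y x).sub (hasDerivAt_id y)
            exact ((hgd (x - y)).hasDerivAt.comp y h1).mul_const (h x)
          have hd' : HasDerivAt (fun z => g (x - z) * h x) (-(deriv g (x - y) * h x)) y := by
            convert hd using 1; ring
          apply hd'.congr_of_eventuallyEq
          have hnb : Set.Iio x ∈ 𝓝 y := Iio_mem_nhds hgt
          filter_upwards [hnb] with z hz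
          simp only [hF]
          rw [max_eq_left (by simp at hz; linarith)]
        rw [show F' x = -(deriv g (x - y) * h x) by simp [hF', hgt]]
        exact this
  -- now compute the integral of F'
  have hsplit : (∫ x in (0:ℝ)..1, F' x) = -∫ x in y..1, deriv g (x - y) * h x := by
    have hIF' : IntervalIntegrable F' volume 0 1 := key.1
    have h01 : (∫ x in (0:ℝ)..1, F' x) = (∫ x in (0:ℝ)..y, F' x) + ∫ x in y..1, F' x :=
      (intervalIntegral.integral_add_adjacent_intervals
        (hIF'.mono_set (by rw [Set.uIcc_of_le hy.1, Set.uIcc_of_le (by norm_num : (0:ℝ) ≤ 1)]; exact Set.Icc_subset_Icc le_rfl hy.2))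
        (hIF'.mono_set (by rw [Set.uIcc_of_le hy.2, Set.uIcc_of_le (by norm_num : (0:ℝ) ≤ 1)]; exact Set.Icc_subset_Icc hy.1 le_rfl))).symm
    have hA : (∫ x in (0:ℝ)..y, F' x) = 0 := by
      rw [intervalIntegral.integral_of_le hy.1]
      rw [setIntegral_congr_fun measurableSet_Ioc
        (fun x hx => by simp [hF', not_lt.2 hx.2] : Set.EqOn F' (fun _ => (0:ℝ)) (Set.Ioc 0 y))]
      exact MeasureTheory.integral_zero _ _
    have hB : (∫ x in y..1, F' x) = ∫ x in y..1, -(deriv g (x - y) * h x) := by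
      rw [intervalIntegral.integral_of_le hy.2, intervalIntegral.integral_of_le hy.2]
      exact setIntegral_congr_fun measurableSet_Ioc
        (fun x hx => by simp [hF', hx.1])
    rw [h01, hA, hB, zero_add, intervalIntegral.integral_neg]
  rw [← hsplit]
  exact key.2

/-- For `g : ℝ → ℝ` continuously differentiable with `g 0 = g 1 = 0`,
the function `φ_{g,g} : y ↦ ∫_y^1 g(x-y) g(x) dx` is twice differentiable on `[0,1]`
(one-sidedly at the endpoints), with second derivative
`φ_{g,g}''(y) = -∫_y^1 g'(x-y) g'(x) dx = -φ_{g',g'}(y)` at every `y ∈ [0,1]`. -/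
theorem stmt5 (g : ℝ → ℝ) (hg : ContDiff ℝ 1 g) (h0 : g 0 = 0) (h1 : g 1 = 0) :
    ∃ φ' : ℝ → ℝ,
      (∀ y ∈ Set.Icc (0 : ℝ) 1,
        HasDerivWithinAt (fun z => ∫ x in z..1, g (x - z) * g x) (φ' y) (Set.Icc 0 1) y) ∧
      (∀ y ∈ Set.Icc (0 : ℝ) 1,
        HasDerivWithinAt φ'
          (-∫ x in y..1, deriv g (x - y) * deriv g x) (Set.Icc 0 1) y) := by
  have hg' : Continuous (deriv g) := hg.continuous_deriv le_rfl
  refine ⟨fun y => ∫ x in y..1, g (x - y) * deriv g x, fun y hy => ?_, fun y hy => ?_⟩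
  · have hcore := (core g g hg hg.continuous hy).hasDerivWithinAt (s := Set.Icc 0 1)
    have h1' := hcore.congr
      (fun z hz => (eq_on_form g g hg.continuous h0 hg.continuous hz).symm)
      (eq_on_form g g hg.continuous h0 hg.continuous hy).symm
    rw [ibp_form g hg h0 h1 hy] at h1'
    exact h1'
  · have hcore := (core g (deriv g) hg hg' hy).hasDerivWithinAt (s := Set.Icc 0 1)
    exact hcore.congr
      (fun z hz => (eq_on_form g (deriv g) hg.continuous h0 hg' hz).symm)
      (eq_on_form g (deriv g) hg.continuous h0 hg' hy).symm
end

section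
/- Let g : ℝ → ℝ be continuously differentiable with g(0) = g(1) = 0. Then ∫_0^1 φ_{g,g}(y) φ_{g′,g′}(y) dy = ∫_0^1 (φ_{g′,g}(y))² dy, i.e. ∫_0^1 (∫_y^1 g(x−y)g(x) dx)(∫_y^1 g′(x−y)g′(x) dx) dy = ∫_0^1 (∫_y^1 g′(x−y)g(x) dx)² dy. -/
open MeasureTheory Set intervalIntegral Metric

/-- One-sided derivative surrogate: `deriv g t` for `t > 0`, `0` for `t ≤ 0`. -/
noncomputable def Dg (g : ℝ → ℝ) (t : ℝ) : ℝ := if t ≤ 0 then 0 else deriv g t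

lemma Dg_meas (g : ℝ → ℝ) (hg : ContDiff ℝ 1 g) : Measurable (Dg g) :=
  Measurable.ite measurableSet_Iic measurable_const (hg.continuous_deriv le_rfl).measurable

lemma Dg_bound (g : ℝ → ℝ) {C t : ℝ} (hC : ∀ s ∈ Icc (-1:ℝ) 1, ‖deriv g s‖ ≤ C)
    (ht : t ∈ Icc (-1:ℝ) 1) : ‖Dg g t‖ ≤ max C 0 := by
  unfold Dg
  split_ifs with h
  · simp
  · exact (hC t ht).trans (le_max_left _ _)

/-- Key derivative lemma: differentiate `y ↦ ∫₀¹ g(max (x-y) 0) h x dx`. -/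
lemma key (g h : ℝ → ℝ) (hg : ContDiff ℝ 1 g) (h0 : g 0 = 0) (hh : Continuous h) (y₀ : ℝ) :
    HasDerivAt (fun y => ∫ x in (0:ℝ)..1, g (max (x - y) 0) * h x)
      (-∫ x in (0:ℝ)..1, Dg g (x - y₀) * h x) y₀ := by
  have hgc : Continuous g := hg.continuous
  have hg' : Continuous (deriv g) := hg.continuous_deriv le_rfl
  have hgd : Differentiable ℝ g := hg.differentiable one_ne_zero
  set R : ℝ := |y₀| + 2 with hR
  obtain ⟨C, hC⟩ := (isCompact_Icc (a := -R) (b := R)).exists_bound_of_continuousOn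
    hg'.continuousOn
  set C' : ℝ := max C 0 with hC'def
  have hC'nonneg : 0 ≤ C' := le_max_right _ _
  have hC' : ∀ t ∈ Icc (-R) R, ‖deriv g t‖ ≤ C' := fun t ht => (hC t ht).trans (le_max_left _ _)
  have hcont : ∀ y : ℝ, Continuous fun x => g (max (x - y) 0) * h x := fun y =>
    (hgc.comp (((continuous_id.sub continuous_const)).max continuous_const)).mul hh
  have key := intervalIntegral.hasDerivAt_integral_of_dominated_loc_of_lip
    (F := fun y x => g (max (x - y) 0) * h x) (F' := fun x => -(Dg g (x - y₀) * h x))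
    (bound := fun x => C' * |h x|) (a := 0) (b := 1) (μ := volume) (x₀ := y₀)
    (ball_mem_nhds y₀ one_pos)
    (Filter.Eventually.of_forall fun y => (hcont y).aestronglyMeasurable)
    ((hcont y₀).intervalIntegrable _ _)
    ((((Dg_meas g hg).comp (measurable_id.sub measurable_const)).mul
      hh.measurable).neg.aestronglyMeasurable)
    ?_ ((continuous_const.mul hh.abs).intervalIntegrable _ _) ?_
  · have := key.2
    rwa [intervalIntegral.integral_neg] at this
  · -- Lipschitz
    refine Filter.Eventually.of_forall fun x hx => ?_
    rw [Set.uIoc_of_le (by norm_num : (0:ℝ) ≤ 1)] at hx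
    rw [lipschitzOnWith_iff_dist_le_mul]
    intro y hy z hz
    rw [mem_ball, Real.dist_eq] at hy hz
    have h0R : (0:ℝ) ≤ R := by rw [hR]; positivity
    have h2 : -|y₀| ≤ y₀ := neg_abs_le y₀
    have hay : max (x - y) 0 ∈ Icc (-R) R := by
      obtain ⟨hy1, hy2⟩ := abs_lt.mp hy
      constructor
      · linarith [le_max_right (x - y) (0:ℝ)]
      · have hxy : x - y ≤ R := by rw [hR]; linarith [hx.2]
        exact max_le hxy h0R
    have haz : max (x - z) 0 ∈ Icc (-R) R := by
      obtain ⟨hz1, hz2⟩ := abs_lt.mp hz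
      constructor
      · linarith [le_max_right (x - z) (0:ℝ)]
      · have hxz : x - z ≤ R := by rw [hR]; linarith [hx.2]
        exact max_le hxz h0R
    have hlip : ‖g (max (x - y) 0) - g (max (x - z) 0)‖
        ≤ C' * ‖max (x - y) 0 - max (x - z) 0‖ :=
      (convex_Icc _ _).norm_image_sub_le_of_norm_deriv_le
        (fun t _ => hgd.differentiableAt) hC' haz hay
    have hmax : |max (x - y) 0 - max (x - z) 0| ≤ |y - z| := by
      have := abs_max_sub_max_le_abs (x - y) (x - z) 0
      have heq : (x - y) - (x - z) = z - y := by ring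
      rw [heq] at this
      rwa [abs_sub_comm z y] at this
    rw [Real.dist_eq, Real.dist_eq, Real.coe_nnabs]
    have : |g (max (x - y) 0) * h x - g (max (x - z) 0) * h x|
        = |g (max (x - y) 0) - g (max (x - z) 0)| * |h x| := by
      rw [← sub_mul, abs_mul]
    rw [this, abs_mul, abs_abs]
    have hC'abs : |C'| = C' := abs_of_nonneg hC'nonneg
    rw [hC'abs]
    calc |g (max (x - y) 0) - g (max (x - z) 0)| * |h x|
        ≤ (C' * |max (x - y) 0 - max (x - z) 0|) * |h x| := by
          apply mul_le_mul_of_nonneg_right _ (abs_nonneg _)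
          simpa [Real.norm_eq_abs] using hlip
      _ ≤ (C' * |y - z|) * |h x| := by
          apply mul_le_mul_of_nonneg_right _ (abs_nonneg _)
          exact mul_le_mul_of_nonneg_left hmax hC'nonneg
      _ = C' * |h x| * |y - z| := by ring
  · -- differentiability a.e.
    have hae : ({y₀}ᶜ : Set ℝ) ∈ MeasureTheory.ae volume :=
      compl_mem_ae_iff.mpr (measure_singleton y₀)
    filter_upwards [hae] with x hx' _
    have hx : x ≠ y₀ := hx'
    rcases lt_or_gt_of_ne hx with hlt | hgt
    · -- x < y₀
      have hD : Dg g (x - y₀) = 0 := if_pos (by linarith)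
      have hev : (fun y => g (max (x - y) 0) * h x) =ᶠ[nhds y₀] fun _ => (0:ℝ) := by
        filter_upwards [Ioi_mem_nhds hlt] with y hy
        have hy' : x < y := hy
        rw [max_eq_right (by linarith), h0, zero_mul]
      have : HasDerivAt (fun _ : ℝ => (0:ℝ)) (-(Dg g (x - y₀) * h x)) y₀ := by
        rw [hD, zero_mul, neg_zero]; exact hasDerivAt_const y₀ 0
      exact this.congr_of_eventuallyEq hev
    · -- y₀ < x
      have hD : Dg g (x - y₀) = deriv g (x - y₀) := if_neg (by push_neg; linarith)
      have h1 : HasDerivAt (fun y : ℝ => x - y) (-1) y₀ := (hasDerivAt_id y₀).const_sub x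
      have h2 : HasDerivAt (fun y => g (x - y)) (deriv g (x - y₀) * (-1)) y₀ :=
        (hgd (x - y₀)).hasDerivAt.comp y₀ h1
      have h3 := h2.mul_const (h x)
      have base : HasDerivAt (fun y => g (x - y) * h x) (-(Dg g (x - y₀) * h x)) y₀ := by
        rw [show -(Dg g (x - y₀) * h x) = deriv g (x - y₀) * -1 * h x by rw [hD]; ring]
        exact h3
      have hev : (fun y => g (max (x - y) 0) * h x) =ᶠ[nhds y₀] fun y => g (x - y) * h x := by
        filter_upwards [Iio_mem_nhds hgt] with y hy
        have hy' : y < x := hy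
        rw [max_eq_left (by linarith)]
      exact base.congr_of_eventuallyEq hev

/-- Rewrite the max-version integral as the original truncated integral. -/
lemma conv1 (g h : ℝ → ℝ) (hgc : Continuous g) (h0 : g 0 = 0) (hh : Continuous h)
    {y : ℝ} (hy : y ∈ Set.Icc (0:ℝ) 1) :
    ∫ x in (0:ℝ)..1, g (max (x - y) 0) * h x = ∫ x in y..1, g (x - y) * h x := by
  have hcont : Continuous fun x => g (max (x - y) 0) * h x :=
    (hgc.comp (((continuous_id.sub continuous_const)).max continuous_const)).mul hh
  rw [← intervalIntegral.integral_add_adjacent_intervals (a := (0:ℝ)) (b := y) (c := 1)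
    (hcont.intervalIntegrable _ _) (hcont.intervalIntegrable _ _)]
  have h1 : ∫ x in (0:ℝ)..y, g (max (x - y) 0) * h x = 0 := by
    rw [intervalIntegral.integral_congr (g := fun _ => (0:ℝ))]
    · simp
    · intro x hx
      rw [Set.uIcc_of_le hy.1] at hx
      obtain ⟨hx1, hx2⟩ := hx
      show g (max (x - y) 0) * h x = 0
      rw [max_eq_right (by linarith), h0, zero_mul]
  have h2 : ∫ x in y..1, g (max (x - y) 0) * h x = ∫ x in y..1, g (x - y) * h x := by
    apply intervalIntegral.integral_congr
    intro x hx
    rw [Set.uIcc_of_le hy.2] at hx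
    obtain ⟨hx1, hx2⟩ := hx
    show g (max (x - y) 0) * h x = g (x - y) * h x
    rw [max_eq_left (by linarith)]
  rw [h1, h2, zero_add]

lemma Dg_intable (g h : ℝ → ℝ) (hg : ContDiff ℝ 1 g) (hh : Continuous h)
    {y a b : ℝ} (hy : y ∈ Set.Icc (0:ℝ) 1) (ha : a ∈ Set.Icc (0:ℝ) 1)
    (hb : b ∈ Set.Icc (0:ℝ) 1) :
    IntervalIntegrable (fun x => Dg g (x - y) * h x) volume a b := by
  obtain ⟨C₁, hC₁⟩ := (isCompact_Icc (a := (-1:ℝ)) (b := 1)).exists_bound_of_continuousOn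
    (hg.continuous_deriv le_rfl).continuousOn
  obtain ⟨C₂, hC₂⟩ := (isCompact_Icc (a := (0:ℝ)) (b := 1)).exists_bound_of_continuousOn
    hh.continuousOn
  have hDm : Measurable fun x => Dg g (x - y) * h x :=
    ((Dg_meas g hg).comp (measurable_id.sub measurable_const)).mul hh.measurable
  rw [intervalIntegrable_iff]
  apply Measure.integrableOn_of_bounded (M := max C₁ 0 * max C₂ 0)
  · exact (measure_Ioc_lt_top (a := a ⊓ b) (b := a ⊔ b)).ne
  · exact hDm.aestronglyMeasurable
  · refine (ae_restrict_iff' measurableSet_uIoc).2 (Filter.Eventually.of_forall fun x hx => ?_)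
    have hx' : x ∈ Set.Icc (0:ℝ) 1 := by
      rcases Set.mem_uIoc.mp hx with hx | hx
      · exact ⟨le_of_lt (lt_of_le_of_lt ha.1 hx.1), le_trans hx.2 hb.2⟩
      · exact ⟨le_of_lt (lt_of_le_of_lt hb.1 hx.1), le_trans hx.2 ha.2⟩
    have ht : x - y ∈ Set.Icc (-1:ℝ) 1 := by
      constructor <;> [linarith [hx'.1, hy.2]; linarith [hx'.2, hy.1]]
    rw [Real.norm_eq_abs, abs_mul]
    have b1 : |Dg g (x - y)| ≤ max C₁ 0 := by
      simpa [Real.norm_eq_abs] using Dg_bound g (C := C₁) hC₁ ht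
    have b2 : |h x| ≤ max C₂ 0 := by
      have := hC₂ x hx'
      rw [Real.norm_eq_abs] at this
      exact this.trans (le_max_left _ _)
    exact mul_le_mul b1 b2 (abs_nonneg _) (le_max_right _ _)

lemma conv2 (g h : ℝ → ℝ) (hg : ContDiff ℝ 1 g) (hh : Continuous h)
    {y : ℝ} (hy : y ∈ Set.Icc (0:ℝ) 1) :
    ∫ x in (0:ℝ)..1, Dg g (x - y) * h x = ∫ x in y..1, deriv g (x - y) * h x := by
  have i1 := Dg_intable g h hg hh hy (Set.left_mem_Icc.2 zero_le_one) hy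
  have i2 := Dg_intable g h hg hh hy hy (Set.right_mem_Icc.2 zero_le_one)
  rw [← intervalIntegral.integral_add_adjacent_intervals (a := (0:ℝ)) (b := y) (c := 1) i1 i2]
  have h1 : ∫ x in (0:ℝ)..y, Dg g (x - y) * h x = 0 := by
    rw [intervalIntegral.integral_congr (g := fun _ => (0:ℝ))]
    · simp
    · intro x hx
      rw [Set.uIcc_of_le hy.1] at hx
      obtain ⟨hx1, hx2⟩ := hx
      have hle : x - y ≤ 0 := by linarith
      show Dg g (x - y) * h x = 0
      simp only [Dg, if_pos hle, zero_mul]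
  have h2 : ∫ x in y..1, Dg g (x - y) * h x = ∫ x in y..1, deriv g (x - y) * h x := by
    apply intervalIntegral.integral_congr_ae
    refine Filter.Eventually.of_forall fun x hx => ?_
    rw [Set.uIoc_of_le hy.2] at hx
    obtain ⟨hx1, hx2⟩ := hx
    have hle : ¬ (x - y ≤ 0) := by push_neg; linarith
    simp only [Dg, if_neg hle]
  rw [h1, h2, zero_add]

lemma q_intable (g h : ℝ → ℝ) (hg : ContDiff ℝ 1 g) (hh : Continuous h) :
    IntervalIntegrable (fun y => ∫ x in (0:ℝ)..1, Dg g (x - y) * h x) volume 0 1 := by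
  obtain ⟨C₁, hC₁⟩ := (isCompact_Icc (a := (-1:ℝ)) (b := 1)).exists_bound_of_continuousOn
    (hg.continuous_deriv le_rfl).continuousOn
  obtain ⟨C₂, hC₂⟩ := (isCompact_Icc (a := (0:ℝ)) (b := 1)).exists_bound_of_continuousOn
    hh.continuousOn
  rw [intervalIntegrable_iff]
  have hunc : MeasureTheory.StronglyMeasurable
      (Function.uncurry fun y x => Dg g (x - y) * h x) :=
    (((Dg_meas g hg).comp (measurable_snd.sub measurable_fst)).mul
      (hh.measurable.comp measurable_snd)).stronglyMeasurable
  apply Measure.integrableOn_of_bounded (M := (max C₁ 0 * max C₂ 0) * 1)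
  · exact (measure_Ioc_lt_top (a := (0:ℝ) ⊓ 1) (b := (0:ℝ) ⊔ 1)).ne
  · have heq : (fun y => ∫ x in (0:ℝ)..1, Dg g (x - y) * h x)
        = fun y => ∫ x in Set.Ioc (0:ℝ) 1, Dg g (x - y) * h x :=
      funext fun y => intervalIntegral.integral_of_le zero_le_one
    rw [heq]
    exact (hunc.integral_prod_right (ν := volume.restrict (Set.Ioc 0 1))).aestronglyMeasurable
  · refine (ae_restrict_iff' measurableSet_uIoc).2 (Filter.Eventually.of_forall fun y hy => ?_)
    rw [Set.uIoc_of_le (by norm_num : (0:ℝ) ≤ 1)] at hy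
    have hy' : y ∈ Set.Icc (0:ℝ) 1 := ⟨le_of_lt hy.1, hy.2⟩
    have : ‖∫ x in (0:ℝ)..1, Dg g (x - y) * h x‖ ≤ (max C₁ 0 * max C₂ 0) * |1 - 0| := by
      apply intervalIntegral.norm_integral_le_of_norm_le_const
      intro x hx
      rw [Set.uIoc_of_le (by norm_num : (0:ℝ) ≤ 1)] at hx
      have hx' : x ∈ Set.Icc (0:ℝ) 1 := ⟨le_of_lt hx.1, hx.2⟩
      have ht : x - y ∈ Set.Icc (-1:ℝ) 1 := by
        constructor <;> [linarith [hx'.1, hy'.2]; linarith [hx'.2, hy'.1]]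
      rw [Real.norm_eq_abs, abs_mul]
      have b1 : |Dg g (x - y)| ≤ max C₁ 0 := by
        simpa [Real.norm_eq_abs] using Dg_bound g (C := C₁) hC₁ ht
      have b2 : |h x| ≤ max C₂ 0 := by
        have := hC₂ x hx'
        rw [Real.norm_eq_abs] at this
        exact this.trans (le_max_left _ _)
      exact mul_le_mul b1 b2 (abs_nonneg _) (le_max_right _ _)
    simpa using this

/-- For `g : ℝ → ℝ` continuously differentiable with `g 0 = g 1 = 0`,
`∫_0^1 φ_{g,g}(y) φ_{g',g'}(y) dy = ∫_0^1 (φ_{g',g}(y))² dy`, where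
`φ_{u,v}(y) = ∫_y^1 u(x-y) v(x) dx`. -/
theorem stmt6 (g : ℝ → ℝ) (hg : ContDiff ℝ 1 g) (h0 : g 0 = 0) (h1 : g 1 = 0) :
    ∫ y in (0:ℝ)..1,
        (∫ x in y..1, g (x - y) * g x) * ∫ x in y..1, deriv g (x - y) * deriv g x
      = ∫ y in (0:ℝ)..1, (∫ x in y..1, deriv g (x - y) * g x) ^ 2 := by
  have hgc : Continuous g := hg.continuous
  have hg' : Continuous (deriv g) := hg.continuous_deriv le_rfl
  have hgd : Differentiable ℝ g := hg.differentiable one_ne_zero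
  -- the four auxiliary functions
  set P : ℝ → ℝ := fun y => ∫ x in (0:ℝ)..1, g (max (x - y) 0) * g x with hPdef
  set Q : ℝ → ℝ := fun y => -∫ x in (0:ℝ)..1, g (max (x - y) 0) * deriv g x with hQdef
  set p : ℝ → ℝ := fun y => -∫ x in (0:ℝ)..1, Dg g (x - y) * g x with hpdef
  set q : ℝ → ℝ := fun y => ∫ x in (0:ℝ)..1, Dg g (x - y) * deriv g x with hqdef
  have hP : ∀ y, HasDerivAt P (p y) y := fun y => key g g hg h0 hgc y
  have hQ : ∀ y, HasDerivAt Q (q y) y := fun y => by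
    have := (key g (deriv g) hg h0 hg' y).neg
    rw [neg_neg] at this; exact this
  have hp_int : IntervalIntegrable p volume 0 1 := (q_intable g g hg hgc).neg
  have hq_int : IntervalIntegrable q volume 0 1 := q_intable g (deriv g) hg hg'
  -- integration by parts in y
  have parts := intervalIntegral.integral_mul_deriv_eq_deriv_mul
    (u := P) (v := Q) (u' := p) (v' := q) (a := 0) (b := 1)
    (fun y _ => hP y) (fun y _ => hQ y) hp_int hq_int
  -- x-integration by parts identity: for y ∈ [0,1]
  have hxibp : ∀ y ∈ Set.Icc (0:ℝ) 1,
      ∫ x in y..1, g (x - y) * deriv g x = -∫ x in y..1, deriv g (x - y) * g x := by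
    intro y _
    have hu : ∀ x ∈ Set.uIcc y 1, HasDerivAt (fun x => g (x - y)) (deriv g (x - y)) x := by
      intro x _
      have h1 : HasDerivAt (fun x : ℝ => x - y) 1 x := (hasDerivAt_id x).sub_const y
      have h2 := (hgd (x - y)).hasDerivAt.comp x h1
      simpa [Function.comp_def] using h2
    have hv : ∀ x ∈ Set.uIcc y 1, HasDerivAt g (deriv g x) x := fun x _ =>
      (hgd x).hasDerivAt
    have hu' : IntervalIntegrable (fun x => deriv g (x - y)) volume y 1 :=
      (hg'.comp (continuous_id.sub continuous_const)).intervalIntegrable _ _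
    have hv' : IntervalIntegrable (deriv g) volume y 1 := hg'.intervalIntegrable _ _
    have := intervalIntegral.integral_mul_deriv_eq_deriv_mul
      (u := fun x => g (x - y)) (v := g) (u' := fun x => deriv g (x - y)) (v' := deriv g)
      hu hv hu' hv'
    simp only [h0, h1, sub_self, mul_zero, zero_mul, zero_sub, sub_zero, zero_add] at this
    rw [this]
  -- identifications on [0,1]
  have hPeq : ∀ y ∈ Set.Icc (0:ℝ) 1, P y = ∫ x in y..1, g (x - y) * g x := fun y hy =>
    conv1 g g hgc h0 hgc hy
  have hqeq : ∀ y ∈ Set.Icc (0:ℝ) 1, q y = ∫ x in y..1, deriv g (x - y) * deriv g x :=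
    fun y hy => conv2 g (deriv g) hg hg' hy
  have hQeq : ∀ y ∈ Set.Icc (0:ℝ) 1, Q y = ∫ x in y..1, deriv g (x - y) * g x := by
    intro y hy
    have hc := conv1 g (deriv g) hgc h0 hg' hy
    show (-∫ x in (0:ℝ)..1, g (max (x - y) 0) * deriv g x) = _
    rw [hc, hxibp y hy, neg_neg]
  have hpeq : ∀ y ∈ Set.Icc (0:ℝ) 1, p y = -∫ x in y..1, deriv g (x - y) * g x := by
    intro y hy
    have hc := conv2 g g hg hgc hy
    show (-∫ x in (0:ℝ)..1, Dg g (x - y) * g x) = _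
    rw [hc]
  -- boundary values
  have hP1 : P 1 = 0 := by
    show (∫ x in (0:ℝ)..1, g (max (x - 1) 0) * g x) = 0
    rw [intervalIntegral.integral_congr (g := fun _ => (0:ℝ))]
    · simp
    · intro x hx
      rw [Set.uIcc_of_le (by norm_num : (0:ℝ) ≤ 1)] at hx
      obtain ⟨hx1, hx2⟩ := hx
      show g (max (x - 1) 0) * g x = 0
      rw [max_eq_right (by linarith), h0, zero_mul]
  have hQ0 : Q 0 = 0 := by
    show (-∫ x in (0:ℝ)..1, g (max (x - 0) 0) * deriv g x) = 0
    have heq : ∫ x in (0:ℝ)..1, g (max (x - 0) 0) * deriv g x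
        = ∫ x in (0:ℝ)..1, g x * deriv g x := by
      apply intervalIntegral.integral_congr
      intro x hx
      rw [Set.uIcc_of_le (by norm_num : (0:ℝ) ≤ 1)] at hx
      show g (max (x - 0) 0) * deriv g x = g x * deriv g x
      rw [sub_zero, max_eq_left hx.1]
    have hv : ∀ x ∈ Set.uIcc (0:ℝ) 1, HasDerivAt g (deriv g x) x := fun x _ =>
      (hgd x).hasDerivAt
    have hself := intervalIntegral.integral_mul_deriv_eq_deriv_mul
      (u := g) (v := g) (u' := deriv g) (v' := deriv g) hv hv
      (hg'.intervalIntegrable _ _) (hg'.intervalIntegrable _ _)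
    simp only [h0, h1, mul_zero, zero_mul, zero_sub, sub_zero, zero_add] at hself
    have hcomm : ∫ x in (0:ℝ)..1, deriv g x * g x = ∫ x in (0:ℝ)..1, g x * deriv g x := by
      apply intervalIntegral.integral_congr
      intro x _; show deriv g x * g x = g x * deriv g x; ring
    rw [hcomm] at hself
    have hzero : ∫ x in (0:ℝ)..1, g x * deriv g x = 0 := by linarith
    rw [heq, hzero, neg_zero]
  -- final assembly
  have hL : ∫ y in (0:ℝ)..1,
      (∫ x in y..1, g (x - y) * g x) * ∫ x in y..1, deriv g (x - y) * deriv g x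
      = ∫ y in (0:ℝ)..1, P y * q y := by
    apply intervalIntegral.integral_congr
    intro y hy
    rw [Set.uIcc_of_le (by norm_num : (0:ℝ) ≤ 1)] at hy
    show (∫ x in y..1, g (x - y) * g x) * (∫ x in y..1, deriv g (x - y) * deriv g x)
      = P y * q y
    rw [hPeq y hy, hqeq y hy]
  have hR : ∫ y in (0:ℝ)..1, (∫ x in y..1, deriv g (x - y) * g x) ^ 2
      = ∫ y in (0:ℝ)..1, -(p y * Q y) := by
    apply intervalIntegral.integral_congr
    intro y hy
    rw [Set.uIcc_of_le (by norm_num : (0:ℝ) ≤ 1)] at hy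
    show (∫ x in y..1, deriv g (x - y) * g x) ^ 2 = -(p y * Q y)
    rw [hpeq y hy, hQeq y hy]
    ring
  rw [hL, hR, parts, hP1, hQ0]
  rw [intervalIntegral.integral_neg]
  ring
end
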